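/- Let λ ∈ {−1, +1} and let f : [0, ∞) → ℝ be locally Lipschitz with f(0) = 0 and |f(s) + λs| ≤ C for all s ≥ 0, for some constant C > 0. Then: (i) for every s ≥ 0 the solution θ ↦ S_θ(s) of dS_θ(s)/dθ = f(S_θ(s)) with S₀(s) = s exists for all θ ∈ ℝ and satisfies S_θ(s) ≥ 0; (ii) for every s ≥ 0 the limit ϱ₀(s) := lim_{λθ → −∞} e^{λθ} S_θ(s) exists, and |e^{λθ} S_θ(s) − ϱ₀(s)| ≤ C e^{λθ} for all s ≥ 0 and all θ ∈ ℝ; in particular the convergence is uniform in s ≥ 0; (iii) if s₀ ≥ 0 satisfies f(s₀) = 0, then S_θ([0, s₀]) ⊆ [0, s₀] for all θ ∈ ℝ and ϱ₀(s) = 0 for all s ∈ [0, s₀]. -/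

import Mathlib

open Set Filter Real

namespace SolitonFlowAux
section
variable {lam C : ℝ} {f : ℝ → ℝ}


lemma lipschitz_glue {g : ℝ → ℝ} {K₁ K₂ : NNReal} {a b c d : ℝ}
    (h₁ : LipschitzOnWith K₁ g (Set.Icc a c)) (h₂ : LipschitzOnWith K₂ g (Set.Icc b d))
    (hbc : b ≤ c) : LipschitzOnWith (max K₁ K₂) g (Set.Icc a d) := by
  rw [lipschitzOnWith_iff_dist_le_mul] at h₁ h₂ ⊢
  have hK₁ : (K₁ : ℝ) ≤ ((max K₁ K₂ : NNReal) : ℝ) := by exact_mod_cast le_max_left K₁ K₂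
  have hK₂ : (K₂ : ℝ) ≤ ((max K₁ K₂ : NNReal) : ℝ) := by exact_mod_cast le_max_right K₁ K₂
  have key : ∀ y ∈ Set.Icc a d, ∀ z ∈ Set.Icc a d, y ≤ z →
      dist (g y) (g z) ≤ ((max K₁ K₂ : NNReal) : ℝ) * dist y z := by
    intro y hy z hz hyz
    have hdist : dist y z = z - y := by rw [Real.dist_eq, abs_of_nonpos (by linarith)]; ring
    by_cases hzc : z ≤ c
    · calc dist (g y) (g z) ≤ (K₁ : ℝ) * dist y z := h₁ y ⟨hy.1, le_trans hyz hzc⟩ z ⟨hz.1, hzc⟩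
        _ ≤ _ := by apply mul_le_mul_of_nonneg_right hK₁ dist_nonneg
    · by_cases hby : b ≤ y
      · calc dist (g y) (g z) ≤ (K₂ : ℝ) * dist y z := h₂ y ⟨hby, le_trans hyz hz.2⟩ z ⟨le_trans hby hyz, hz.2⟩
          _ ≤ _ := by apply mul_le_mul_of_nonneg_right hK₂ dist_nonneg
      · push_neg at hzc hby
        have hyc : y ≤ c := le_trans hby.le hbc
        have hcd : c ≤ d := le_trans hzc.le hz.2
        have d1 : dist y c = c - y := by rw [Real.dist_eq, abs_of_nonpos (by linarith)]; ring
        have d2 : dist c z = z - c := by rw [Real.dist_eq, abs_of_nonpos (by linarith)]; ring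
        calc dist (g y) (g z) ≤ dist (g y) (g c) + dist (g c) (g z) := dist_triangle _ _ _
          _ ≤ (K₁ : ℝ) * dist y c + (K₂ : ℝ) * dist c z := by
              gcongr
              · exact h₁ y ⟨hy.1, hyc⟩ c ⟨le_trans hy.1 hyc, le_refl c⟩
              · exact h₂ c ⟨hbc, hcd⟩ z ⟨le_trans hbc hzc.le, hz.2⟩
          _ ≤ ((max K₁ K₂ : NNReal) : ℝ) * dist y c + ((max K₁ K₂ : NNReal) : ℝ) * dist c z := by
              gcongr
          _ = ((max K₁ K₂ : NNReal) : ℝ) * dist y z := by rw [d1, d2, hdist]; ring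
  intro y hy z hz
  rcases le_total y z with h | h
  · exact key y hy z hz h
  · rw [dist_comm (g y), dist_comm y]; exact key z hz y hy h

lemma exists_lipschitzOnWith_Icc {g : ℝ → ℝ}
    (hloc : ∀ x : ℝ, ∃ K : NNReal, ∃ ε : ℝ, 0 < ε ∧ LipschitzOnWith K g (Set.Icc (x - ε) (x + ε)))
    (a b : ℝ) : ∃ K : NNReal, LipschitzOnWith K g (Set.Icc a b) := by
  rcases le_or_gt b a with hba | hab
  · refine ⟨1, ?_⟩
    rw [lipschitzOnWith_iff_dist_le_mul]
    intro y hy z hz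
    have : y = z := le_antisymm (le_trans hy.2 (le_trans hba hz.1)) (le_trans hz.2 (le_trans hba hy.1))
    simp [this]
  · set T : Set ℝ := {c | c ∈ Set.Icc a b ∧ ∃ K : NNReal, LipschitzOnWith K g (Set.Icc a c)} with hT
    have haT : a ∈ T := by
      obtain ⟨K, ε, hε, hK⟩ := hloc a
      exact ⟨⟨le_refl a, hab.le⟩, K, hK.mono (Set.Icc_subset_Icc (by linarith) (by linarith))⟩
    have hTne : T.Nonempty := ⟨a, haT⟩
    have hbdd : BddAbove T := ⟨b, fun c hc => hc.1.2⟩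
    set m := sSup T with hm
    have ham : a ≤ m := le_csSup hbdd haT
    have hmb : m ≤ b := csSup_le hTne fun c hc => hc.1.2
    obtain ⟨K₀, ε, hε, hK₀⟩ := hloc m
    obtain ⟨c, hcT, hc⟩ := exists_lt_of_lt_csSup hTne (show m - ε < m by linarith)
    obtain ⟨⟨hac, hcb⟩, Kc, hKc⟩ := hcT
    -- glue
    have hglue : LipschitzOnWith (max Kc K₀) g (Set.Icc a (m + ε)) :=
      lipschitz_glue hKc hK₀ hc.le
    have hmem : min b (m + ε) ∈ T := by
      refine ⟨⟨le_min hab.le (by linarith), min_le_left _ _⟩, max Kc K₀,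
        hglue.mono (Set.Icc_subset_Icc le_rfl (min_le_right _ _))⟩
    have hle : min b (m + ε) ≤ m := le_csSup hbdd hmem
    have hbm : b ≤ m := by
      by_contra hbm
      push_neg at hbm
      rcases min_cases b (m + ε) with ⟨h1, _⟩ | ⟨h1, _⟩ <;> rw [h1] at hle <;> linarith
    have : m = b := le_antisymm hmb hbm
    have : min b (m + ε) = b := by rw [min_eq_left (by linarith)]
    rw [this] at hmem
    exact hmem.2



noncomputable def gext (lam : ℝ) (f : ℝ → ℝ) (x : ℝ) : ℝ := f (max x 0) - lam * min x 0

lemma gext_of_nonneg {x : ℝ} (hx : 0 ≤ x) : gext lam f x = f x := by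
  simp [gext, max_eq_left hx, min_eq_right hx]

lemma gext_zero (hf0 : f 0 = 0) : gext lam f 0 = 0 := by simp [gext, hf0]

lemma gext_grow (hf0 : f 0 = 0) (hC : 0 ≤ C)
    (hgrow : ∀ s, 0 ≤ s → |f s + lam * s| ≤ C) :
    ∀ x, |gext lam f x + lam * x| ≤ C := by
  intro x
  rcases le_or_gt 0 x with hx | hx
  · rw [gext_of_nonneg hx]; exact hgrow x hx
  · have : gext lam f x = -(lam * x) := by
      rw [gext, max_eq_right hx.le, min_eq_left hx.le, hf0]; ring
    rw [this]; simpa using hC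

lemma gext_loclip (hlam1 : |lam| = 1) (hf0 : f 0 = 0)
    (hf : ∀ s, 0 ≤ s → ∃ K : NNReal, ∃ t ∈ nhdsWithin s (Set.Ici (0 : ℝ)),
      LipschitzOnWith K f t) :
    ∀ x : ℝ, ∃ K : NNReal, ∃ ε : ℝ, 0 < ε ∧
      LipschitzOnWith K (gext lam f) (Set.Icc (x - ε) (x + ε)) := by
  intro x
  rcases lt_or_ge x 0 with hx | hx
  · refine ⟨1, -x / 2, by linarith, ?_⟩
    rw [lipschitzOnWith_iff_dist_le_mul]
    intro y hy z hz
    have hy0 : y ≤ 0 := by have := hy.2; linarith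
    have hz0 : z ≤ 0 := by have := hz.2; linarith
    have hgy : gext lam f y = -(lam * y) := by
      rw [gext, max_eq_right hy0, min_eq_left hy0, hf0]; ring
    have hgz : gext lam f z = -(lam * z) := by
      rw [gext, max_eq_right hz0, min_eq_left hz0, hf0]; ring
    rw [Real.dist_eq, Real.dist_eq, hgy, hgz]
    have : -(lam * y) - -(lam * z) = lam * (z - y) := by ring
    rw [this, abs_mul, hlam1, one_mul, NNReal.coe_one, one_mul, abs_sub_comm]
  · obtain ⟨K, t, ht, hK⟩ := hf x hx
    rw [Metric.mem_nhdsWithin_iff] at ht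
    obtain ⟨ε, hε, hball⟩ := ht
    refine ⟨K + 1, ε / 2, by linarith, ?_⟩
    rw [lipschitzOnWith_iff_dist_le_mul]
    intro y hy z hz
    have hmem : ∀ w ∈ Set.Icc (x - ε / 2) (x + ε / 2), max w 0 ∈ t := by
      intro w hw
      apply hball
      refine ⟨?_, le_max_right w 0⟩
      rw [Metric.mem_ball, Real.dist_eq]
      have h1 : |max w 0 - x| ≤ |w - x| := by
        have := abs_max_sub_max_le_abs w x 0
        rwa [max_eq_left hx] at this
      have h2 : |w - x| ≤ ε / 2 := by
        rw [abs_le]; constructor <;> [linarith [hw.1]; linarith [hw.2]]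
      linarith
    have hd1 : dist (f (max y 0)) (f (max z 0)) ≤ (K : ℝ) * dist (max y 0) (max z 0) :=
      hK.dist_le_mul _ (hmem y hy) _ (hmem z hz)
    have hd2 : |max y 0 - max z 0| ≤ |y - z| := abs_max_sub_max_le_abs y z 0
    have hd3 : |min y 0 - min z 0| ≤ |y - z| := by
      have := abs_min_sub_min_le_max y 0 z 0
      simpa using this
    rw [Real.dist_eq] at hd1 ⊢
    rw [Real.dist_eq] at hd1
    have expand : gext lam f y - gext lam f z
        = (f (max y 0) - f (max z 0)) - lam * (min y 0 - min z 0) := by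
      rw [gext, gext]; ring
    calc |gext lam f y - gext lam f z|
        ≤ |f (max y 0) - f (max z 0)| + |lam * (min y 0 - min z 0)| := by
          rw [expand]; exact abs_sub _ _
      _ ≤ (K : ℝ) * |y - z| + |y - z| := by
          rw [abs_mul, hlam1, one_mul]
          have := le_trans hd1 (mul_le_mul_of_nonneg_left hd2 (K.coe_nonneg))
          linarith
      _ = ((K + 1 : NNReal) : ℝ) * |y - z| := by push_cast; ring


end


lemma cont_of_loclip {g : ℝ → ℝ}
    (hloc : ∀ x : ℝ, ∃ K : NNReal, ∃ ε : ℝ, 0 < ε ∧ LipschitzOnWith K g (Set.Icc (x - ε) (x + ε))) :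
    Continuous g := by
  rw [continuous_iff_continuousAt]
  intro x
  obtain ⟨K, ε, hε, hK⟩ := hloc x
  exact (hK.continuousOn).continuousAt (Icc_mem_nhds (by linarith) (by linarith))

lemma exists_sol_Icc {lam C : ℝ} {g : ℝ → ℝ}
    (hlam1 : |lam| = 1) (hC : 0 ≤ C)
    (hKcc : ∀ a b : ℝ, ∃ K : NNReal, LipschitzOnWith K g (Set.Icc a b))
    (gcont : Continuous g)
    (ggrow : ∀ x, |g x + lam * x| ≤ C)
    (T : ℝ) (hT : 0 < T) (s : ℝ) :
    ∃ x : ℝ → ℝ, x 0 = s ∧ ∀ t ∈ Set.Icc (-T) T,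
      HasDerivWithinAt x (g (x t)) (Set.Icc (-T) T) t := by
  set E := Real.exp T with hE
  have hE1 : (1:ℝ) ≤ E := by rw [hE]; simpa using Real.exp_le_exp.2 hT.le
  have hexp_le : ∀ t ∈ Set.Icc (-T) T, Real.exp (lam * t) ≤ E ∧ Real.exp (-(lam * t)) ≤ E := by
    intro t ht
    have h1 : |lam * t| ≤ T := by
      rw [abs_mul, hlam1, one_mul, abs_le]; exact ⟨ht.1, ht.2⟩
    rw [abs_le] at h1
    exact ⟨Real.exp_le_exp.2 h1.2, Real.exp_le_exp.2 (by linarith)⟩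
  set R : ℝ := C * E * T + 1 with hR
  have hRpos : 0 < R := by positivity
  set B : ℝ := E * (|s| + R) with hB
  obtain ⟨K, hK⟩ := hKcc (-B) B
  set F : ℝ → ℝ → ℝ := fun t y =>
    Real.exp (lam * t) * (g (Real.exp (-(lam * t)) * y) + lam * (Real.exp (-(lam * t)) * y))
    with hF
  have hxB : ∀ t ∈ Set.Icc (-T) T, ∀ y ∈ Metric.closedBall s R,
      Real.exp (-(lam * t)) * y ∈ Set.Icc (-B) B := by
    intro t ht y hy
    have hyb : |y| ≤ |s| + R := by
      rw [Metric.mem_closedBall, Real.dist_eq] at hy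
      have := abs_sub_abs_le_abs_sub y s
      linarith
    have h1 : |Real.exp (-(lam * t)) * y| ≤ B := by
      rw [abs_mul, abs_of_pos (Real.exp_pos _), hB]
      have := (hexp_le t ht).2
      have h0 : (0:ℝ) ≤ |y| := abs_nonneg y
      nlinarith [Real.exp_pos (-(lam * t))]
    rw [abs_le] at h1
    exact ⟨h1.1, h1.2⟩
  have epe : ∀ t : ℝ, Real.exp (lam * t) * Real.exp (-(lam * t)) = 1 := by
    intro t; rw [← Real.exp_add]; simp
  have hpl : IsPicardLindelof F (tmin := -T) (tmax := T) ⟨0, by constructor <;> linarith⟩ s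
      ⟨R, hRpos.le⟩ 0 ⟨C * E, by positivity⟩ (K + 1) := by
    constructor
    · intro t ht
      rw [lipschitzOnWith_iff_dist_le_mul]
      intro y₁ h₁ y₂ h₂
      have hx₁ := hxB t ht y₁ h₁
      have hx₂ := hxB t ht y₂ h₂
      have hg12 := hK.dist_le_mul _ hx₁ _ hx₂
      rw [Real.dist_eq, Real.dist_eq] at hg12
      rw [Real.dist_eq, Real.dist_eq]
      have expand : F t y₁ - F t y₂ = Real.exp (lam * t) *
          ((g (Real.exp (-(lam * t)) * y₁) - g (Real.exp (-(lam * t)) * y₂))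
            + lam * (Real.exp (-(lam * t)) * y₁ - Real.exp (-(lam * t)) * y₂)) := by
        rw [hF]; ring
      have habs : |Real.exp (-(lam * t)) * y₁ - Real.exp (-(lam * t)) * y₂|
          = Real.exp (-(lam * t)) * |y₁ - y₂| := by
        rw [← mul_sub, abs_mul, abs_of_pos (Real.exp_pos _)]
      calc |F t y₁ - F t y₂|
          ≤ Real.exp (lam * t) *
            (|g (Real.exp (-(lam * t)) * y₁) - g (Real.exp (-(lam * t)) * y₂)|
              + |lam * (Real.exp (-(lam * t)) * y₁ - Real.exp (-(lam * t)) * y₂)|) := by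
            rw [expand, abs_mul, abs_of_pos (Real.exp_pos _)]
            exact mul_le_mul_of_nonneg_left (abs_add_le _ _) (Real.exp_pos _).le
        _ ≤ Real.exp (lam * t) * ((K : ℝ) * (Real.exp (-(lam * t)) * |y₁ - y₂|)
              + Real.exp (-(lam * t)) * |y₁ - y₂|) := by
            apply mul_le_mul_of_nonneg_left _ (Real.exp_pos _).le
            rw [abs_mul, hlam1, one_mul, habs]
            rw [habs] at hg12
            linarith
        _ = ((K + 1 : NNReal) : ℝ) * |y₁ - y₂| := by
            push_cast
            linear_combination ((K : ℝ) * |y₁ - y₂| + |y₁ - y₂|) * epe t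
    · intro y hy
      apply Continuous.continuousOn
      have h1 : Continuous fun t : ℝ => Real.exp (lam * t) :=
        Real.continuous_exp.comp (continuous_const.mul continuous_id)
      have h2 : Continuous fun t : ℝ => Real.exp (-(lam * t)) * y :=
        ((Real.continuous_exp.comp (continuous_const.mul continuous_id).neg).mul continuous_const)
      exact h1.mul ((gcont.comp h2).add (continuous_const.mul h2))
    · intro t ht y hy
      have hx := hxB t ht y hy
      have h1 : |F t y| = Real.exp (lam * t) * |g (Real.exp (-(lam * t)) * y)
          + lam * (Real.exp (-(lam * t)) * y)| := by
        rw [hF, abs_mul, abs_of_pos (Real.exp_pos _)]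
      rw [Real.norm_eq_abs, h1]
      calc Real.exp (lam * t) * |g (Real.exp (-(lam * t)) * y)
          + lam * (Real.exp (-(lam * t)) * y)| ≤ Real.exp (lam * t) * C :=
            mul_le_mul_of_nonneg_left (ggrow _) (Real.exp_pos _).le
        _ ≤ E * C := mul_le_mul_of_nonneg_right (hexp_le t ht).1 hC
        _ = C * E := mul_comm _ _
    · have : max (T - 0) (0 - -T) = T := by simp
      show C * E * max (T - 0) (0 - -T) ≤ R - 0
      rw [this, sub_zero, hR]
      linarith
  obtain ⟨y, hy0, hyd⟩ := hpl.exists_eq_forall_mem_Icc_hasDerivWithinAt₀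
  refine ⟨fun t => Real.exp (-(lam * t)) * y t, by simp [hy0], ?_⟩
  intro t ht
  have h1 : HasDerivAt (fun t : ℝ => Real.exp (-(lam * t)))
      (Real.exp (-(lam * t)) * (-lam)) t := by
    have h0 : HasDerivAt (fun t : ℝ => -(lam * t)) (-lam) t := by
      exact (((hasDerivAt_id t).const_mul lam).neg).congr_deriv (by simp)
    exact h0.exp
  have h2 := (h1.hasDerivWithinAt (s := Set.Icc (-T) T)).mul (hyd t ht)
  refine h2.congr_deriv (Eq.symm ?_)
  rw [hF]
  have epe' : Real.exp (-(lam * t)) * Real.exp (lam * t) = 1 := by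
    rw [← Real.exp_add]; simp
  set X := g (Real.exp (-(lam * t)) * y t) with hX
  linear_combination (-(X) - lam * (Real.exp (-(lam * t)) * y t)) * epe'



lemma mem_Icc_of_abs_le {w Bu Bv : ℝ} (h1 : |w| ≤ Bu) :
    w ∈ Set.Icc (-(max Bu Bv)) (max Bu Bv) := by
  have h2 := abs_le.1 h1
  have h3 : Bu ≤ max Bu Bv := le_max_left _ _
  exact ⟨by linarith, by linarith⟩

lemma uniq0 {g : ℝ → ℝ}
    (hKcc : ∀ a b : ℝ, ∃ K : NNReal, LipschitzOnWith K g (Set.Icc a b))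
    {a b : ℝ} (ha : a ≤ 0) (hb : 0 ≤ b) {u v : ℝ → ℝ}
    (hu : ∀ t ∈ Set.Icc a b, HasDerivWithinAt u (g (u t)) (Set.Icc a b) t)
    (hv : ∀ t ∈ Set.Icc a b, HasDerivWithinAt v (g (v t)) (Set.Icc a b) t)
    (heq : u 0 = v 0) : Set.EqOn u v (Set.Icc a b) := by
  have hucont : ContinuousOn u (Set.Icc a b) := fun t ht => (hu t ht).continuousWithinAt
  have hvcont : ContinuousOn v (Set.Icc a b) := fun t ht => (hv t ht).continuousWithinAt
  obtain ⟨Bu, hBu⟩ := isCompact_Icc.exists_bound_of_continuousOn hucont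
  obtain ⟨Bv, hBv⟩ := isCompact_Icc.exists_bound_of_continuousOn hvcont
  have humem : ∀ t ∈ Set.Icc a b, u t ∈ Set.Icc (-(max Bu Bv)) (max Bu Bv) := fun t ht =>
    mem_Icc_of_abs_le (by rw [← Real.norm_eq_abs]; exact hBu t ht)
  have hvmem : ∀ t ∈ Set.Icc a b, v t ∈ Set.Icc (-(max Bv Bu)) (max Bv Bu) := fun t ht =>
    mem_Icc_of_abs_le (by rw [← Real.norm_eq_abs]; exact hBv t ht)
  rw [max_comm Bv Bu] at hvmem
  obtain ⟨K, hK⟩ := hKcc (-(max Bu Bv)) (max Bu Bv)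
  have hsub1 : Set.Icc a (0:ℝ) ⊆ Set.Icc a b := Set.Icc_subset_Icc le_rfl hb
  have hsub2 : Set.Icc (0:ℝ) b ⊆ Set.Icc a b := Set.Icc_subset_Icc ha le_rfl
  have hright : Set.EqOn u v (Set.Icc 0 b) := by
    apply ODE_solution_unique_of_mem_Icc_right (v := fun _ x => g x)
      (s := fun _ => Set.Icc (-(max Bu Bv)) (max Bu Bv)) (fun _ _ => hK)
      (hucont.mono hsub2) ?_ ?_ (hvcont.mono hsub2) ?_ ?_ heq
    · intro t ht
      refine (hu t (hsub2 (Set.Ico_subset_Icc_self ht))).mono_of_mem_nhdsWithin ?_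
      exact mem_of_superset (Ico_mem_nhdsGE_of_mem ⟨le_refl t, ht.2⟩)
        (Set.Ico_subset_Icc_self.trans (Set.Icc_subset_Icc (le_trans ha ht.1) le_rfl))
    · exact fun t ht => humem t (hsub2 (Set.Ico_subset_Icc_self ht))
    · intro t ht
      refine (hv t (hsub2 (Set.Ico_subset_Icc_self ht))).mono_of_mem_nhdsWithin ?_
      exact mem_of_superset (Ico_mem_nhdsGE_of_mem ⟨le_refl t, ht.2⟩)
        (Set.Ico_subset_Icc_self.trans (Set.Icc_subset_Icc (le_trans ha ht.1) le_rfl))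
    · exact fun t ht => hvmem t (hsub2 (Set.Ico_subset_Icc_self ht))
  have hleft : Set.EqOn u v (Set.Icc a 0) := by
    apply ODE_solution_unique_of_mem_Icc_left (v := fun _ x => g x)
      (s := fun _ => Set.Icc (-(max Bu Bv)) (max Bu Bv)) (fun _ _ => hK)
      (hucont.mono hsub1) ?_ ?_ (hvcont.mono hsub1) ?_ ?_ heq
    · intro t ht
      refine (hu t (hsub1 (Set.Ioc_subset_Icc_self ht))).mono_of_mem_nhdsWithin ?_
      exact mem_of_superset (Ioc_mem_nhdsLE_of_mem ⟨ht.1, le_refl t⟩)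
        (Set.Ioc_subset_Icc_self.trans (Set.Icc_subset_Icc le_rfl (le_trans ht.2 hb)))
    · exact fun t ht => humem t (hsub1 (Set.Ioc_subset_Icc_self ht))
    · intro t ht
      refine (hv t (hsub1 (Set.Ioc_subset_Icc_self ht))).mono_of_mem_nhdsWithin ?_
      exact mem_of_superset (Ioc_mem_nhdsLE_of_mem ⟨ht.1, le_refl t⟩)
        (Set.Ioc_subset_Icc_self.trans (Set.Icc_subset_Icc le_rfl (le_trans ht.2 hb)))
    · exact fun t ht => hvmem t (hsub1 (Set.Ioc_subset_Icc_self ht))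
  intro t ht
  rcases le_total t 0 with h | h
  · exact hleft ⟨ht.1, h⟩
  · exact hright ⟨h, ht.2⟩

lemma const_uniq {g : ℝ → ℝ}
    (hKcc : ∀ a b : ℝ, ∃ K : NNReal, LipschitzOnWith K g (Set.Icc a b))
    {u : ℝ → ℝ} (hu : ∀ θ, HasDerivAt u (g (u θ)) θ) {c θ₀ : ℝ}
    (hgc : g c = 0) (h0 : u θ₀ = c) : ∀ θ, u θ = c := by
  intro θ
  have hucont : Continuous u :=
    continuous_iff_continuousAt.2 fun x => (hu x).differentiableAt.continuousAt
  have ht₀ : θ₀ ∈ Set.Ioo (min θ θ₀ - 1) (max θ θ₀ + 1) :=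
    ⟨by have := min_le_right θ θ₀; linarith, by have := le_max_right θ θ₀; linarith⟩
  have hθmem : θ ∈ Set.Icc (min θ θ₀ - 1) (max θ θ₀ + 1) :=
    ⟨by have := min_le_left θ θ₀; linarith, by have := le_max_left θ θ₀; linarith⟩
  obtain ⟨Bu, hBu⟩ := isCompact_Icc.exists_bound_of_continuousOn
    (hucont.continuousOn : ContinuousOn u (Set.Icc (min θ θ₀ - 1) (max θ θ₀ + 1)))
  obtain ⟨K, hK⟩ := hKcc (-(max Bu |c|)) (max Bu |c|)
  have humem : ∀ t ∈ Set.Icc (min θ θ₀ - 1) (max θ θ₀ + 1),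
      u t ∈ Set.Icc (-(max Bu |c|)) (max Bu |c|) := fun t ht =>
    mem_Icc_of_abs_le (by rw [← Real.norm_eq_abs]; exact hBu t ht)
  have hcmem : c ∈ Set.Icc (-(max Bu |c|)) (max Bu |c|) := by
    constructor
    · have h1 : |c| ≤ max Bu |c| := le_max_right _ _
      have h2 : -|c| ≤ c := neg_abs_le c
      linarith
    · exact le_trans (le_abs_self c) (le_max_right _ _)
  have := ODE_solution_unique_of_mem_Icc (v := fun _ x => g x)
    (s := fun _ => Set.Icc (-(max Bu |c|)) (max Bu |c|)) (fun _ _ => hK) ht₀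
    hucont.continuousOn (fun t _ => hu t) (fun t ht => humem t (Set.Ioo_subset_Icc_self ht))
    continuousOn_const (fun t _ => by simpa [hgc] using hasDerivAt_const t c)
    (fun t _ => hcmem) h0
  exact this hθmem

lemma exists_global {g : ℝ → ℝ}
    (hKcc : ∀ a b : ℝ, ∃ K : NNReal, LipschitzOnWith K g (Set.Icc a b))
    (hsolIcc : ∀ T : ℝ, 0 < T → ∀ s : ℝ, ∃ x : ℝ → ℝ, x 0 = s ∧ ∀ t ∈ Set.Icc (-T) T,
      HasDerivWithinAt x (g (x t)) (Set.Icc (-T) T) t)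
    (s : ℝ) :
    ∃ u : ℝ → ℝ, u 0 = s ∧ ∀ θ, HasDerivAt u (g (u θ)) θ := by
  have hsol := fun n : ℕ => hsolIcc ((n:ℝ)+1) (by positivity) s
  choose xs hx0 hxd using hsol
  have compat : ∀ n m : ℕ, n ≤ m →
      Set.EqOn (xs n) (xs m) (Set.Icc (-((n:ℝ)+1)) ((n:ℝ)+1)) := by
    intro n m hnm
    have hnm' : (n:ℝ) ≤ m := by exact_mod_cast hnm
    have hsub : Set.Icc (-((n:ℝ)+1)) ((n:ℝ)+1) ⊆ Set.Icc (-((m:ℝ)+1)) ((m:ℝ)+1) :=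
      Set.Icc_subset_Icc (by linarith) (by linarith)
    exact uniq0 hKcc (neg_nonpos.mpr (by positivity)) (by positivity)
      (hxd n) (fun t ht => (hxd m t (hsub ht)).mono hsub) (by rw [hx0, hx0])
  refine ⟨fun θ => xs ⌈|θ|⌉₊ θ, by simp [hx0], ?_⟩
  intro θ
  set n := ⌈|θ|⌉₊ with hn
  have hθn : |θ| < (n:ℝ) + 1 := lt_of_le_of_lt (Nat.le_ceil _) (by exact_mod_cast lt_add_one _)
  have hθmem : θ ∈ Set.Ioo (-((n:ℝ)+1)) ((n:ℝ)+1) := by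
    rw [abs_lt] at hθn; exact ⟨hθn.1, hθn.2⟩
  have heqn : ∀ θ' ∈ Set.Ioo (-((n:ℝ)+1)) ((n:ℝ)+1), xs ⌈|θ'|⌉₊ θ' = xs n θ' := by
    intro θ' h'
    rcases le_or_gt ⌈|θ'|⌉₊ n with h | h
    · apply compat _ _ h
      have h1 : |θ'| ≤ ((⌈|θ'|⌉₊ : ℕ) : ℝ) := Nat.le_ceil _
      rw [Set.mem_Icc, ← abs_le]
      linarith
    · exact (compat n _ h.le (Set.Ioo_subset_Icc_self h')).symm
  have hder : HasDerivAt (xs n) (g (xs n θ)) θ :=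
    (hxd n θ (Set.Ioo_subset_Icc_self hθmem)).hasDerivAt
      (Icc_mem_nhds hθmem.1 hθmem.2)
  have hee : (fun θ' => xs ⌈|θ'|⌉₊ θ') =ᶠ[nhds θ] xs n := by
    filter_upwards [isOpen_Ioo.mem_nhds hθmem] with θ' h' using heqn θ' h'
  exact hder.congr_of_eventuallyEq hee



lemma limit_lemma {lam C : ℝ} (hlam : lam = -1 ∨ lam = 1) (hC : 0 ≤ C) (h : ℝ → ℝ)
    (hd : ∀ θ, ∃ d : ℝ, HasDerivAt h d θ ∧ |d| ≤ C * Real.exp (lam * θ)) :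
    ∃ l : ℝ, (∀ θ, |h θ - l| ≤ C * Real.exp (lam * θ)) ∧
      Filter.Tendsto h (Filter.comap (fun θ => lam * θ) Filter.atBot) (nhds l) := by
  have hll : lam * lam = 1 := by rcases hlam with h' | h' <;> rw [h'] <;> norm_num
  choose d hdd hdb using hd
  have hφ : ∀ θ : ℝ, HasDerivAt (fun θ => C * lam * Real.exp (lam * θ))
      (C * Real.exp (lam * θ)) θ := by
    intro θ
    have h1 : HasDerivAt (fun θ : ℝ => Real.exp (lam * θ)) (Real.exp (lam * θ) * (lam * 1)) θ :=
      ((hasDerivAt_id θ).const_mul lam).exp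
    have := h1.const_mul (C * lam)
    refine this.congr_deriv (Eq.symm ?_)
    rw [mul_one]
    linear_combination (-(C * Real.exp (lam * θ))) * hll
  have hmono1 : Monotone (fun θ => h θ + C * lam * Real.exp (lam * θ)) := by
    apply monotone_of_hasDerivAt_nonneg (f' := fun θ => d θ + C * Real.exp (lam * θ))
    · exact fun θ => (hdd θ).add (hφ θ)
    · intro θ
      have := (abs_le.1 (hdb θ)).1
      simp only [Pi.zero_apply]
      linarith
  have hmono2 : Monotone (fun θ => C * lam * Real.exp (lam * θ) - h θ) := by
    apply monotone_of_hasDerivAt_nonneg (f' := fun θ => C * Real.exp (lam * θ) - d θ)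
    · exact fun θ => (hφ θ).sub (hdd θ)
    · intro θ
      have := (abs_le.1 (hdb θ)).2
      simp only [Pi.zero_apply]
      linarith
  have key1 : ∀ a b : ℝ, a ≤ b →
      |h b - h a| ≤ C * lam * Real.exp (lam * b) - C * lam * Real.exp (lam * a) := by
    intro a b hab
    have m1 := hmono1 hab
    have m2 := hmono2 hab
    simp only at m1 m2
    rw [abs_le]
    constructor <;> linarith
  have key2 : ∀ θ₁ θ₂ : ℝ, lam * θ₂ ≤ lam * θ₁ → |h θ₁ - h θ₂| ≤ C * Real.exp (lam * θ₁) := by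
    intro θ₁ θ₂ hle
    have he : Real.exp (lam * θ₂) ≤ Real.exp (lam * θ₁) := Real.exp_le_exp.2 hle
    have hCe : C * Real.exp (lam * θ₂) ≤ C * Real.exp (lam * θ₁) :=
      mul_le_mul_of_nonneg_left he hC
    have hp1 : 0 ≤ C * Real.exp (lam * θ₁) := by positivity
    have hp2 : 0 ≤ C * Real.exp (lam * θ₂) := by positivity
    rcases le_total θ₁ θ₂ with hθ | hθ
    · have := key1 θ₁ θ₂ hθ
      rw [abs_sub_comm]
      rcases hlam with h' | h' <;> subst h' <;> nlinarith
    · have := key1 θ₂ θ₁ hθ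
      rcases hlam with h' | h' <;> subst h' <;> nlinarith
  have harg : ∀ n : ℕ, lam * (lam * (-(n:ℝ))) = -(n:ℝ) := by
    intro n; rw [← mul_assoc, hll, one_mul]
  set cs : ℕ → ℝ := fun n => h (lam * (-(n:ℝ))) with hcs
  have htend0 : Filter.Tendsto (fun N : ℕ => C * Real.exp (-(N:ℝ))) atTop (nhds 0) := by
    have h1 : Filter.Tendsto (fun N : ℕ => -(N:ℝ)) atTop atBot :=
      tendsto_neg_atBot_iff.mpr tendsto_natCast_atTop_atTop
    have h2 := Real.tendsto_exp_atBot.comp h1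
    have := h2.const_mul C
    simpa using this
  have hcauchy : CauchySeq cs := by
    apply cauchySeq_of_le_tendsto_0 (fun N : ℕ => C * Real.exp (-(N:ℝ))) _ htend0
    intro n m N hn hm
    rw [Real.dist_eq]
    wlog hnm : m ≤ n generalizing n m
    · rw [abs_sub_comm]
      exact this m n hm hn (le_of_not_ge hnm)
    have hmn' : (m:ℝ) ≤ n := by exact_mod_cast hnm
    have hb : lam * (lam * (-(n:ℝ))) ≤ lam * (lam * (-(m:ℝ))) := by
      rw [harg, harg]; linarith
    rw [abs_sub_comm]
    calc |cs m - cs n| ≤ C * Real.exp (lam * (lam * (-(m:ℝ)))) := key2 _ _ hb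
      _ = C * Real.exp (-(m:ℝ)) := by rw [harg]
      _ ≤ C * Real.exp (-(N:ℝ)) := by
          apply mul_le_mul_of_nonneg_left _ hC
          apply Real.exp_le_exp.2
          have : (N:ℝ) ≤ m := by exact_mod_cast hm
          linarith
  obtain ⟨l, hl⟩ := cauchySeq_tendsto_of_complete hcauchy
  have hbound : ∀ θ, |h θ - l| ≤ C * Real.exp (lam * θ) := by
    intro θ
    obtain ⟨N₀, hN₀⟩ := exists_nat_ge (-(lam * θ))
    have htd : Filter.Tendsto (fun n => |h θ - cs n|) atTop (nhds (|h θ - l|)) :=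
      ((tendsto_const_nhds.sub hl).abs)
    apply le_of_tendsto htd
    filter_upwards [eventually_ge_atTop N₀] with n hn
    apply key2
    rw [harg]
    have h1 : (N₀:ℝ) ≤ n := by exact_mod_cast hn
    linarith
  refine ⟨l, hbound, ?_⟩
  have hF0 : Filter.Tendsto (fun θ => C * Real.exp (lam * θ))
      (Filter.comap (fun θ => lam * θ) Filter.atBot) (nhds 0) := by
    have hcomap : Filter.Tendsto (fun θ : ℝ => lam * θ)
        (Filter.comap (fun θ : ℝ => lam * θ) Filter.atBot) Filter.atBot := tendsto_comap
    have := (Real.tendsto_exp_atBot.comp hcomap).const_mul C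
    simpa [Function.comp] using this
  have hsq : Filter.Tendsto (fun θ => h θ - l)
      (Filter.comap (fun θ => lam * θ) Filter.atBot) (nhds 0) := by
    exact squeeze_zero_norm (fun θ => by rw [Real.norm_eq_abs]; exact hbound θ) hF0
  have := hsq.add_const l
  simpa using this


end SolitonFlowAux

/-- Let `λ ∈ {−1,+1}` and let `f : [0,∞) → ℝ` be locally Lipschitz
with `f(0) = 0` and `|f(s) + λs| ≤ C` for all `s ≥ 0`.  Then the flow `S_θ` of `f`
on `[0,∞)` exists for all `θ ∈ ℝ`; the limit `ϱ₀(s) = lim_{λθ→−∞} e^{λθ} S_θ(s)`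
exists with `|e^{λθ}S_θ(s) − ϱ₀(s)| ≤ C e^{λθ}` (uniform convergence); and if
`f(s₀) = 0` with `s₀ ≥ 0` then `[0,s₀]` is flow-invariant and `ϱ₀ ≡ 0` on `[0,s₀]`. -/
theorem soliton_vector_field_flow_rescaled_limit
    (lam : ℝ) (hlam : lam = -1 ∨ lam = 1)
    (f : ℝ → ℝ)
    (hf : ∀ s, 0 ≤ s → ∃ K : NNReal, ∃ t ∈ nhdsWithin s (Set.Ici (0 : ℝ)),
      LipschitzOnWith K f t)
    (hf0 : f 0 = 0)
    (C : ℝ) (hC : 0 < C) (hgrow : ∀ s, 0 ≤ s → |f s + lam * s| ≤ C) :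
    ∃ S : ℝ → ℝ → ℝ, ∃ ρ₀ : ℝ → ℝ,
      (∀ s, 0 ≤ s → S 0 s = s) ∧
      (∀ s, 0 ≤ s → ∀ θ : ℝ, HasDerivAt (fun θ' => S θ' s) (f (S θ s)) θ) ∧
      (∀ s, 0 ≤ s → ∀ θ : ℝ, 0 ≤ S θ s) ∧
      (∀ s, 0 ≤ s → Filter.Tendsto (fun θ => Real.exp (lam * θ) * S θ s)
        (Filter.comap (fun θ => lam * θ) Filter.atBot) (nhds (ρ₀ s))) ∧
      (∀ s, 0 ≤ s → ∀ θ : ℝ,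
        |Real.exp (lam * θ) * S θ s - ρ₀ s| ≤ C * Real.exp (lam * θ)) ∧
      (∀ s₀, 0 ≤ s₀ → f s₀ = 0 →
        (∀ θ : ℝ, ∀ s ∈ Set.Icc (0 : ℝ) s₀, S θ s ∈ Set.Icc (0 : ℝ) s₀) ∧
        (∀ s ∈ Set.Icc (0 : ℝ) s₀, ρ₀ s = 0)) := by
  classical
  have hlam1 : |lam| = 1 := by rcases hlam with h | h <;> rw [h] <;> norm_num
  have hll : lam * lam = 1 := by rcases hlam with h | h <;> rw [h] <;> norm_num
  set g : ℝ → ℝ := SolitonFlowAux.gext lam f with hgdef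
  have hg0 : g 0 = 0 := SolitonFlowAux.gext_zero hf0
  have hgf : ∀ x, 0 ≤ x → g x = f x := fun x hx => SolitonFlowAux.gext_of_nonneg hx
  have hggrow : ∀ x, |g x + lam * x| ≤ C := SolitonFlowAux.gext_grow hf0 hC.le hgrow
  have hloc := SolitonFlowAux.gext_loclip hlam1 hf0 hf
  have hKcc : ∀ a b : ℝ, ∃ K : NNReal, LipschitzOnWith K g (Set.Icc a b) := fun a b =>
    SolitonFlowAux.exists_lipschitzOnWith_Icc hloc a b
  have gcont : Continuous g := SolitonFlowAux.cont_of_loclip hloc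
  have hsolIcc : ∀ T : ℝ, 0 < T → ∀ s : ℝ, ∃ x : ℝ → ℝ, x 0 = s ∧ ∀ t ∈ Set.Icc (-T) T,
      HasDerivWithinAt x (g (x t)) (Set.Icc (-T) T) t :=
    fun T hT s => SolitonFlowAux.exists_sol_Icc hlam1 hC.le hKcc gcont hggrow T hT s
  have hex : ∀ s : ℝ, ∃ u : ℝ → ℝ, 0 ≤ s → (u 0 = s ∧ ∀ θ, HasDerivAt u (g (u θ)) θ) := by
    intro s
    obtain ⟨u, hu⟩ := SolitonFlowAux.exists_global hKcc hsolIcc s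
    exact ⟨u, fun _ => hu⟩
  choose U hU using hex
  have hU0 : ∀ s, 0 ≤ s → U s 0 = s := fun s hs => (hU s hs).1
  have hUd : ∀ s, 0 ≤ s → ∀ θ, HasDerivAt (U s) (g (U s θ)) θ := fun s hs => (hU s hs).2
  have hUcont : ∀ s, 0 ≤ s → Continuous (U s) := fun s hs =>
    continuous_iff_continuousAt.2 fun x => (hUd s hs x).differentiableAt.continuousAt
  have hnonneg : ∀ s, 0 ≤ s → ∀ θ, 0 ≤ U s θ := by
    intro s hs θ
    by_contra hneg
    push_neg at hneg
    have h0 : (0:ℝ) ∈ Set.uIcc (U s 0) (U s θ) := by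
      rw [Set.mem_uIcc]
      right
      exact ⟨hneg.le, by rw [hU0 s hs]; exact hs⟩
    obtain ⟨θ₀, _, hθ₀⟩ := intermediate_value_uIcc ((hUcont s hs).continuousOn) h0
    have := SolitonFlowAux.const_uniq hKcc (hUd s hs) hg0 hθ₀ θ
    linarith
  have hupper : ∀ s₀, 0 ≤ s₀ → f s₀ = 0 → ∀ s, 0 ≤ s → s ≤ s₀ → ∀ θ, U s θ ≤ s₀ := by
    intro s₀ hs₀ hfs₀ s hs hss₀ θ
    have hgs₀ : g s₀ = 0 := by rw [hgf s₀ hs₀]; exact hfs₀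
    by_contra hgt
    push_neg at hgt
    have h0 : s₀ ∈ Set.uIcc (U s 0) (U s θ) := by
      rw [Set.mem_uIcc]
      left
      exact ⟨by rw [hU0 s hs]; exact hss₀, hgt.le⟩
    obtain ⟨θ₀, _, hθ₀⟩ := intermediate_value_uIcc ((hUcont s hs).continuousOn) h0
    have := SolitonFlowAux.const_uniq hKcc (hUd s hs) hgs₀ hθ₀ θ
    linarith
  have hlim : ∀ s : ℝ, ∃ l : ℝ, 0 ≤ s →
      ((∀ θ, |Real.exp (lam * θ) * U s θ - l| ≤ C * Real.exp (lam * θ)) ∧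
        Filter.Tendsto (fun θ => Real.exp (lam * θ) * U s θ)
          (Filter.comap (fun θ => lam * θ) Filter.atBot) (nhds l)) := by
    intro s
    by_cases hs : 0 ≤ s
    · obtain ⟨l, h1, h2⟩ := SolitonFlowAux.limit_lemma hlam hC.le
        (fun θ => Real.exp (lam * θ) * U s θ) (by
          intro θ
          refine ⟨Real.exp (lam * θ) * (lam * 1) * U s θ + Real.exp (lam * θ) * g (U s θ),
            ?_, ?_⟩
          · exact (((hasDerivAt_id θ).const_mul lam).exp).mul (hUd s hs θ)
          · have heq : Real.exp (lam * θ) * (lam * 1) * U s θ + Real.exp (lam * θ) * g (U s θ)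
                = Real.exp (lam * θ) * (g (U s θ) + lam * U s θ) := by ring
            rw [heq, abs_mul, abs_of_pos (Real.exp_pos _)]
            calc Real.exp (lam * θ) * |g (U s θ) + lam * U s θ|
                ≤ Real.exp (lam * θ) * C :=
                  mul_le_mul_of_nonneg_left (hggrow _) (Real.exp_pos _).le
              _ = C * Real.exp (lam * θ) := mul_comm _ _)
      exact ⟨l, fun _ => ⟨h1, h2⟩⟩
    · exact ⟨0, fun h => absurd h hs⟩
  choose ρ₀ hρ using hlim
  refine ⟨fun θ s => U s θ, ρ₀, fun s hs => hU0 s hs, ?_, fun s hs θ => hnonneg s hs θ,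
    fun s hs => (hρ s hs).2, fun s hs θ => (hρ s hs).1 θ, ?_⟩
  · intro s hs θ
    have := hUd s hs θ
    rwa [hgf _ (hnonneg s hs θ)] at this
  · intro s₀ hs₀ hfs₀
    constructor
    · intro θ s hsmem
      exact ⟨hnonneg s hsmem.1 θ, hupper s₀ hs₀ hfs₀ s hsmem.1 hsmem.2 θ⟩
    · intro s hsmem
      have hs := hsmem.1
      have hb1 := (hρ s hs).1
      have hball : ∀ θ, |Real.exp (lam * θ) * U s θ| ≤ s₀ * Real.exp (lam * θ) := by
        intro θ
        rw [abs_mul, abs_of_pos (Real.exp_pos _), abs_of_nonneg (hnonneg s hs θ)]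
        calc Real.exp (lam * θ) * U s θ ≤ Real.exp (lam * θ) * s₀ :=
              mul_le_mul_of_nonneg_left (hupper s₀ hs₀ hfs₀ s hs hsmem.2 θ) (Real.exp_pos _).le
          _ = s₀ * Real.exp (lam * θ) := mul_comm _ _
      have hkey : ∀ n : ℕ, |ρ₀ s| ≤ (C + s₀) * Real.exp (-(n:ℝ)) := by
        intro n
        have harg : lam * (lam * (-(n:ℝ))) = -(n:ℝ) := by rw [← mul_assoc, hll, one_mul]
        have h1 := hb1 (lam * (-(n:ℝ)))
        have h2 := hball (lam * (-(n:ℝ)))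
        rw [harg] at h1 h2
        have h3 := abs_sub_abs_le_abs_sub (ρ₀ s)
          (Real.exp (-(n:ℝ)) * U s (lam * (-(n:ℝ))))
        rw [abs_sub_comm (ρ₀ s)] at h3
        nlinarith [h1, h2, h3]
      have htend : Filter.Tendsto (fun n : ℕ => (C + s₀) * Real.exp (-(n:ℝ)))
          atTop (nhds 0) := by
        have h1 : Filter.Tendsto (fun N : ℕ => -(N:ℝ)) atTop atBot :=
          tendsto_neg_atBot_iff.mpr tendsto_natCast_atTop_atTop
        have h2 := (Real.tendsto_exp_atBot.comp h1).const_mul (C + s₀)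
        simpa using h2
      have hle : |ρ₀ s| ≤ 0 := ge_of_tendsto htend (Filter.Eventually.of_forall hkey)
      exact abs_eq_zero.mp (le_antisymm hle (abs_nonneg _))
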